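/- arXiv:1405.2870 — 3 statements merged into one kernel-verified Lean document; each statement's English description precedes it below -/
import Mathlib

section
/- Let T be an infinite, locally finite tree that is one-ended, and let Q be a locally finite graph obtained from T by identifying vertices (i.e., Q is the quotient of T under an equivalence relation on vertices, with induced adjacency, and Q is locally finite). Then Q is one-ended: for every finite set U ⊂ v(Q), Q − U has exactly one infinite connected component. -/
/-- A locally finite infinite graph is one-ended if removing any finite vertex
set leaves exactly one infinite connected component. -/
def OneEnded {V : Type*} (G : SimpleGraph V) : Prop :=
  ∀ U : Finset V,
    ∃! C : (G.induce ((↑U : Set V)ᶜ)).ConnectedComponent, C.supp.Infinite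

/-- Let `T` be an infinite, locally finite, one-ended tree and
let `Q` be a locally finite graph obtained from `T` by identifying vertices
(a quotient along a surjection `π` with finite fibers, adjacency being induced
from `T`). Then `Q` is one-ended. -/
theorem quotient_of_one_ended_tree_is_one_ended {A B : Type*} [Infinite A]
    (T : SimpleGraph A) (Q : SimpleGraph B)
    (hT : T.IsTree) (hlfT : T.LocallyFinite) (hone : OneEnded T)
    (π : A → B) (hsurj : Function.Surjective π)
    (hfib : ∀ b : B, (π ⁻¹' {b}).Finite)
    (hadj : ∀ u v : B, u ≠ v →
      (Q.Adj u v ↔ ∃ x y : A, T.Adj x y ∧ π x = u ∧ π y = v))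
    (hlfQ : Q.LocallyFinite) :
    OneEnded Q := by
  classical
  intro U
  -- the preimage of U is a finite set of vertices of T
  have hU'fin : (π ⁻¹' (↑U : Set B)).Finite := by
    have h1 : (π ⁻¹' (↑U : Set B)) = ⋃ b ∈ U, π ⁻¹' {b} := by
      ext a; simp
    rw [h1]
    exact U.finite_toSet.biUnion fun b _ => hfib b
  set U' : Finset A := hU'fin.toFinset with hU'def
  have hU'coe : (↑U' : Set A) = π ⁻¹' ↑U := hU'fin.coe_toFinset
  have hmem : ∀ a : A, a ∈ ((↑U' : Set A)ᶜ) ↔ π a ∉ U := by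
    intro a
    simp [hU'coe]
  -- the unique infinite component of T − U'
  obtain ⟨C, hCinf, hCuniq⟩ := hone U'
  -- the map between deleted subgraphs induced by π
  let f : ((↑U' : Set A)ᶜ : Set A) → ((↑U : Set B)ᶜ : Set B) :=
    fun a => ⟨π a, by simpa using (hmem a).1 a.2⟩
  -- reachability transfers along f
  have key : ∀ x y : ((↑U' : Set A)ᶜ : Set A),
      (T.induce ((↑U' : Set A)ᶜ)).Reachable x y →
      (Q.induce ((↑U : Set B)ᶜ)).Reachable (f x) (f y) := by
    intro x y hxy
    obtain ⟨w⟩ := hxy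
    induction w with
    | nil => exact SimpleGraph.Reachable.refl _
    | @cons u v w h p ih =>
      refine SimpleGraph.Reachable.trans ?_ ih
      by_cases he : π (u : A) = π (v : A)
      · have : f u = f v := Subtype.ext he
        rw [this]
      · have hTadj : T.Adj (u : A) (v : A) := h
        have hQadj : Q.Adj (π (u : A)) (π (v : A)) :=
          (hadj _ _ he).2 ⟨u, v, hTadj, rfl, rfl⟩
        exact (SimpleGraph.Adj.reachable (by exact hQadj :
          (Q.induce ((↑U : Set B)ᶜ)).Adj (f u) (f v)))
  -- f has finite fibers
  have ffib : ∀ d, (f ⁻¹' {d}).Finite := by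
    intro d
    have hsub : (f ⁻¹' {d}) ⊆ Subtype.val ⁻¹' (π ⁻¹' {(d : B)}) := by
      rintro x hx
      have : f x = d := hx
      simpa using congrArg Subtype.val this
    exact Set.Finite.subset (Set.Finite.preimage
      (Set.injOn_of_injective Subtype.val_injective) (hfib _)) hsub
  -- images of infinite sets under f are infinite
  have himage : ∀ s : Set ((↑U' : Set A)ᶜ : Set A), s.Infinite → (f '' s).Infinite := by
    intro s hs hfin
    apply hs
    have hsub : s ⊆ ⋃ d ∈ f '' s, f ⁻¹' {d} := fun x hx =>
      Set.mem_biUnion (Set.mem_image_of_mem f hx) rfl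
    exact Set.Finite.subset (hfin.biUnion fun d _ => ffib d) hsub
  -- f is surjective
  have hfsurj : Function.Surjective f := by
    rintro ⟨b, hb⟩
    obtain ⟨a, rfl⟩ := hsurj b
    refine ⟨⟨a, (hmem a).2 (by simpa using hb)⟩, rfl⟩
  -- pick a base point in C
  obtain ⟨c₀, hc₀⟩ := hCinf.nonempty
  set D := (Q.induce ((↑U : Set B)ᶜ)).connectedComponentMk (f c₀) with hDdef
  -- f maps C.supp into D.supp
  have hmapsTo : ∀ x, x ∈ C.supp → f x ∈ D.supp := by
    intro x hx
    rw [SimpleGraph.ConnectedComponent.mem_supp_iff] at hx hc₀ ⊢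
    have hreach : (T.induce ((↑U' : Set A)ᶜ)).Reachable x c₀ :=
      SimpleGraph.ConnectedComponent.eq.mp (hx.trans hc₀.symm)
    exact (SimpleGraph.ConnectedComponent.eq.mpr (key _ _ hreach))
  have hDinf : D.supp.Infinite :=
    (himage _ hCinf).mono (by rintro _ ⟨x, hx, rfl⟩; exact hmapsTo x hx)
  -- finiteness of the family of components of T − U'
  haveI : Fact T.Preconnected := ⟨hT.isConnected.preconnected⟩
  haveI : T.LocallyFinite := hlfT
  haveI hFin : Finite ((T.induce ((↑U' : Set A)ᶜ)).ConnectedComponent) :=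
    SimpleGraph.componentCompl_finite (G := T) U'
  -- the complement of C.supp is finite
  have hcomplfin : (C.suppᶜ : Set ((↑U' : Set A)ᶜ : Set A)).Finite := by
    have hsub : (C.suppᶜ : Set ((↑U' : Set A)ᶜ : Set A)) ⊆
        ⋃ (D' : (T.induce ((↑U' : Set A)ᶜ)).ConnectedComponent),
          (if D' = C then (∅ : Set _) else D'.supp) := by
      intro x hx
      refine Set.mem_iUnion.mpr ⟨(T.induce ((↑U' : Set A)ᶜ)).connectedComponentMk x, ?_⟩
      have hne : (T.induce ((↑U' : Set A)ᶜ)).connectedComponentMk x ≠ C := by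
        intro h
        exact hx ((SimpleGraph.ConnectedComponent.mem_supp_iff _ _).2 h)
      rw [if_neg hne]
      exact rfl
    refine Set.Finite.subset (Set.finite_iUnion fun D' => ?_) hsub
    by_cases h : D' = C
    · simp [h]
    · rw [if_neg h]
      by_contra hinf
      exact h (hCuniq D' hinf)
  -- uniqueness
  refine ⟨D, hDinf, ?_⟩
  intro D' hD'
  have hpre : (f ⁻¹' D'.supp).Infinite := by
    intro hfin
    exact hD' (by rw [← Set.image_preimage_eq D'.supp hfsurj]; exact hfin.image f)
  obtain ⟨x, hx⟩ := (hpre.diff hcomplfin).nonempty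
  have hxC : x ∈ C.supp := by
    have := hx.2
    simpa using this
  have hxD' : f x ∈ D'.supp := hx.1
  have hxD : f x ∈ D.supp := hmapsTo x hxC
  rw [SimpleGraph.ConnectedComponent.mem_supp_iff] at hxD' hxD
  rw [← hxD', hxD]
end

section
/- Let (H_n)_{1 ≤ n ≤ ∞} be locally finite connected rooted graphs with H_n → H_∞ in the local weak (Benjamini–Schramm) sense, meaning for every r > 0 there exists N such that for all n ≥ N the rooted balls B_{H_n}(ρ_n, r) and B_{H_∞}(ρ_∞, r) are isomorphic as rooted graphs. Suppose H_∞ is recurrent. Fix a finite vertex set D ⊆ v(H_∞) (contained in all H_n for n large, via the ball isomorphisms) and, for each n, a function φ_n: v(H_n) → ℝ harmonic with boundary D, with all φ_n agreeing on D and uniformly bounded. Then for every vertex v of H_∞, φ_n(v) → φ_∞(v) as n → ∞. -/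
open MeasureTheory Finset Filter
open scoped Classical

/-- The process `X` is a simple random walk on the locally finite graph `G`
started at `v`, specified through its finite-dimensional distributions. -/
def SRWLaw {V : Type*} (G : SimpleGraph V)
    (hfin : ∀ v : V, (G.neighborSet v).Finite)
    {Ω : Type*} [MeasureSpace Ω] (X : ℕ → Ω → V) (v : V) : Prop :=
  ∀ (n : ℕ) (f : ℕ → V),
    volume {ω | ∀ i ≤ n, X i ω = f i} =
      if f 0 = v then
        ∏ i ∈ Finset.range n,
          (if G.Adj (f i) (f (i + 1))
            then (((hfin (f i)).toFinset.card : ENNReal))⁻¹ else 0)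
      else 0

/-- A locally finite graph is recurrent if simple random walk (any process
with the simple random walk law) returns to its starting point almost surely. -/
def Recurrent {V : Type*} (G : SimpleGraph V)
    (hfin : ∀ v : V, (G.neighborSet v).Finite) : Prop :=
  ∀ (Ω : Type) (_ : MeasureSpace Ω) (X : ℕ → Ω → V) (v : V),
    IsProbabilityMeasure (volume : Measure Ω) → SRWLaw G hfin X v →
      volume {ω | ∃ n, 0 < n ∧ X n ω = v} = 1

/-- `φ` is harmonic on `G` with boundary `D`. -/
def HarmonicOn {V : Type*} (G : SimpleGraph V)
    (hfin : ∀ v : V, (G.neighborSet v).Finite) (D : Finset V) (φ : V → ℝ) : Prop :=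
  ∀ v ∉ D, φ v = (∑ w ∈ (hfin v).toFinset, φ w) / ((hfin v).toFinset.card : ℝ)

open scoped ENNReal NNReal

namespace SRWAux

variable {V : Type*} (G : SimpleGraph V) (hfin : ∀ v : V, (G.neighborSet v).Finite)

/-- degree -/
noncomputable abbrev deg (u : V) : ℕ := (hfin u).toFinset.card

/-- enumeration of neighbors -/
noncomputable def enbr (u : V) (k : ℕ) : V :=
  if h : 0 < deg G hfin u then
    ((hfin u).toFinset.equivFin.symm ⟨k % deg G hfin u, Nat.mod_lt _ h⟩ : V)
  else u

variable {G}

lemma enbr_mem (u : V) (k : ℕ) (h : 0 < deg G hfin u) :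
    enbr G hfin u k ∈ (hfin u).toFinset := by
  rw [enbr, dif_pos h]; exact Subtype.mem _

lemma enbr_adj (u : V) (k : ℕ) (h : 0 < deg G hfin u) :
    G.Adj u (enbr G hfin u k) := by
  have := enbr_mem hfin u k h
  rwa [Set.Finite.mem_toFinset, SimpleGraph.mem_neighborSet] at this

lemma enbr_fin (u : V) (k : Fin (deg G hfin u)) :
    enbr G hfin u ↑k = ((hfin u).toFinset.equivFin.symm k : V) := by
  have h : 0 < deg G hfin u := lt_of_le_of_lt (Nat.zero_le _) k.isLt
  rw [enbr, dif_pos h]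
  exact congrArg (fun j => (((hfin u).toFinset.equivFin.symm j : _) : V))
    (Fin.ext (Nat.mod_eq_of_lt k.isLt))

lemma sum_enbr {M : Type*} [AddCommMonoid M] (u : V) (g : V → M) :
    ∑ k : Fin (deg G hfin u), g (enbr G hfin u ↑k) = ∑ w ∈ (hfin u).toFinset, g w := by
  rw [Finset.sum_congr rfl (fun k _ => by rw [enbr_fin hfin u k])]
  rw [Equiv.sum_comp ((hfin u).toFinset.equivFin.symm) (fun x => g (↑x : V))]
  exact Finset.sum_coe_sort _ _

lemma exists_enbr (u w : V) (h : G.Adj u w) :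
    ∃ k : Fin (deg G hfin u), enbr G hfin u ↑k = w := by
  have hm : w ∈ (hfin u).toFinset := by
    rw [Set.Finite.mem_toFinset]; exact h
  refine ⟨(hfin u).toFinset.equivFin ⟨w, hm⟩, ?_⟩
  rw [enbr_fin hfin u _, Equiv.symm_apply_apply]



/-- one step of the walk driven by digit expansion -/
noncomputable def step (p : V × ℝ) : V × ℝ :=
  (enbr G hfin p.1 ⌊(deg G hfin p.1 : ℝ) * p.2⌋₊,
   (deg G hfin p.1 : ℝ) * p.2 - (⌊(deg G hfin p.1 : ℝ) * p.2⌋₊ : ℕ))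

/-- the walk -/
noncomputable def X (u : V) (n : ℕ) (ω : ℝ) : V := ((step hfin)^[n] (u, ω)).1

lemma X_zero (u : V) (ω : ℝ) : X hfin u 0 ω = u := rfl

lemma subint_mem {d k : ℕ} (hk : k < d) {ω : ℝ}
    (hω : ω ∈ Set.Ico ((k : ℝ) / (d:ℝ)) ((k + 1 : ℝ) / (d:ℝ))) :
    ((d:ℝ) * ω - k ∈ Set.Ico (0:ℝ) 1) ∧ ⌊(d : ℝ) * ω⌋₊ = k := by
  have hd : (0:ℝ) < (d : ℝ) := by exact_mod_cast Nat.pos_of_ne_zero (by omega)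
  obtain ⟨h1, h2⟩ := hω
  rw [div_le_iff₀ hd] at h1
  rw [lt_div_iff₀ hd] at h2
  have hmem : (d:ℝ) * ω - k ∈ Set.Ico (0:ℝ) 1 := by
    constructor <;> [linarith; linarith]
  refine ⟨hmem, ?_⟩
  rw [Nat.floor_eq_iff (by linarith : (0:ℝ) ≤ (d:ℝ)*ω)]
  refine ⟨by linarith, by linarith⟩

lemma subint_sub {d k : ℕ} (hk : k < d) :
    Set.Ico ((k : ℝ) / (d:ℝ)) ((k + 1 : ℝ) / (d:ℝ)) ⊆ Set.Ico (0:ℝ) 1 := by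
  have hd : (0:ℝ) < (d : ℝ) := by exact_mod_cast Nat.pos_of_ne_zero (by omega)
  intro ω hω
  obtain ⟨h1, h2⟩ := hω
  constructor
  · exact le_trans (by positivity) h1
  · calc ω < ((k:ℝ)+1)/(d:ℝ) := h2
      _ ≤ 1 := by
          rw [div_le_one hd]
          exact_mod_cast hk

lemma step_eq {u : V} {k : ℕ} (hk : k < deg G hfin u) {ω : ℝ}
    (hω : ω ∈ Set.Ico ((k : ℝ) / (deg G hfin u)) ((k + 1 : ℝ) / (deg G hfin u))) :
    step hfin (u, ω) = (enbr G hfin u k, (deg G hfin u : ℝ) * ω - k) := by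
  have h := (subint_mem hk hω).2
  simp only [step, h]

lemma X_shift {u : V} {k : ℕ} (hk : k < deg G hfin u) {ω : ℝ}
    (hω : ω ∈ Set.Ico ((k : ℝ) / (deg G hfin u)) ((k + 1 : ℝ) / (deg G hfin u)))
    (n : ℕ) :
    X hfin u (n + 1) ω = X hfin (enbr G hfin u k) n ((deg G hfin u : ℝ) * ω - k) := by
  unfold X
  rw [Function.iterate_succ_apply, step_eq hfin hk hω]

/-- preimage scaling -/
lemma volume_preimage_affine (d : ℕ) (hd : 0 < d) (k : ℝ) (B : Set ℝ) :
    volume ((fun ω : ℝ => (d : ℝ) * ω - k) ⁻¹' B) = ((d : ℝ≥0∞))⁻¹ * volume B := by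
  have h1 : (fun ω : ℝ => (d : ℝ) * ω - k) = (fun x : ℝ => x + (-k)) ∘ (fun x : ℝ => (d:ℝ) * x) := by
    funext x; simp [sub_eq_add_neg]
  rw [h1, Set.preimage_comp]
  rw [Real.volume_preimage_mul_left (by exact_mod_cast hd.ne' : (d:ℝ) ≠ 0)]
  rw [measure_preimage_add_right]
  congr 1
  rw [abs_of_nonneg (by positivity)]
  rw [← ENNReal.ofReal_natCast d, ← ENNReal.ofReal_inv_of_pos (by exact_mod_cast hd)]

lemma mem_subint_iff {d k : ℕ} (hk : k < d) (ω : ℝ) :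
    ω ∈ Set.Ico ((k : ℝ) / (d:ℝ)) ((k + 1 : ℝ) / (d:ℝ)) ↔
      (d:ℝ) * ω - k ∈ Set.Ico (0:ℝ) 1 := by
  have hd : (0:ℝ) < (d : ℝ) := by exact_mod_cast Nat.pos_of_ne_zero (by omega)
  simp only [Set.mem_Ico]
  rw [div_le_iff₀ hd, lt_div_iff₀ hd]
  constructor
  · rintro ⟨h1, h2⟩; constructor <;> linarith
  · rintro ⟨h1, h2⟩; constructor <;> linarith

set_option maxHeartbeats 1000000 in
/-- The key decomposition lemma. -/
lemma slice (u : V) (hd : 0 < deg G hfin u) (S : Set ℝ) (A : Fin (deg G hfin u) → Set ℝ)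
    (hS : ∀ (k : Fin (deg G hfin u)) (ω : ℝ),
      ω ∈ Set.Ico (((k:ℕ) : ℝ) / (deg G hfin u)) (((k:ℕ) + 1 : ℝ) / (deg G hfin u)) →
      (ω ∈ S ↔ ((deg G hfin u : ℝ) * ω - (k:ℕ)) ∈ A k))
    (hA : ∀ k, MeasurableSet (A k ∩ Set.Ico 0 1)) :
    MeasurableSet (S ∩ Set.Ico 0 1) ∧
      volume (S ∩ Set.Ico 0 1) =
        ∑ k : Fin (deg G hfin u), ((deg G hfin u : ℝ≥0∞))⁻¹ * volume (A k ∩ Set.Ico 0 1) := by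
  have hdR : (0:ℝ) < ((deg G hfin u):ℝ) := by exact_mod_cast hd
  have hpiece : S ∩ Set.Ico 0 1 =
      ⋃ k : Fin (deg G hfin u),
        (fun ω : ℝ => ((deg G hfin u):ℝ) * ω - ((k:ℕ):ℝ)) ⁻¹' (A k ∩ Set.Ico 0 1) := by
    ext ω
    simp only [Set.mem_inter_iff, Set.mem_iUnion, Set.mem_preimage]
    constructor
    · rintro ⟨h1, h2a, h2b⟩
      have hnn : (0:ℝ) ≤ ((deg G hfin u):ℝ) * ω := by positivity
      have hklt : ⌊((deg G hfin u):ℝ) * ω⌋₊ < deg G hfin u := by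
        rw [Nat.floor_lt hnn]
        nlinarith
      refine ⟨⟨⌊((deg G hfin u):ℝ) * ω⌋₊, hklt⟩, ?_⟩
      have hωmem : ω ∈ Set.Ico ((⌊((deg G hfin u):ℝ) * ω⌋₊ : ℝ) / (deg G hfin u))
          ((⌊((deg G hfin u):ℝ) * ω⌋₊ + 1 : ℝ) / (deg G hfin u)) := by
        rw [mem_subint_iff hklt]
        rw [Set.mem_Ico]
        have hle := Nat.floor_le hnn
        have hlt := Nat.lt_floor_add_one (((deg G hfin u):ℝ) * ω)
        constructor <;> linarith
      exact ⟨(hS _ ω hωmem).1 h1, ((mem_subint_iff hklt ω).1 hωmem)⟩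
    · rintro ⟨k, hk1, hk2⟩
      have hωmem : ω ∈ Set.Ico (((k:ℕ):ℝ) / (deg G hfin u)) (((k:ℕ) + 1 : ℝ) / (deg G hfin u)) := by
        rw [mem_subint_iff k.isLt]; exact hk2
      exact ⟨(hS k ω hωmem).2 hk1, subint_sub k.isLt hωmem⟩
  have hTmeas : ∀ k : Fin (deg G hfin u),
      Measurable (fun ω : ℝ => ((deg G hfin u):ℝ) * ω - ((k:ℕ):ℝ)) := by
    intro k
    exact (measurable_id.const_mul _).sub measurable_const
  have hmeas : MeasurableSet (S ∩ Set.Ico 0 1) := by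
    rw [hpiece]
    exact MeasurableSet.iUnion fun k => (hA k).preimage (hTmeas k)
  refine ⟨hmeas, ?_⟩
  rw [hpiece]
  rw [measure_iUnion ?_ (fun k => (hA k).preimage (hTmeas k))]
  · rw [tsum_fintype]
    exact Finset.sum_congr rfl fun k _ => by rw [volume_preimage_affine _ hd]
  · -- pairwise disjoint
    have hdisj : ∀ (a b : ℕ), a < b →
        Disjoint (Set.Ico ((a:ℝ)/((deg G hfin u):ℝ)) (((a:ℝ)+1)/((deg G hfin u):ℝ)))
          (Set.Ico ((b:ℝ)/((deg G hfin u):ℝ)) (((b:ℝ)+1)/((deg G hfin u):ℝ))) := by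
      intro a b hab
      rw [Set.disjoint_left]
      intro x hx hx'
      obtain ⟨_, hx2⟩ := hx
      obtain ⟨hx3, _⟩ := hx'
      have h1 : ((a:ℝ)+1)/((deg G hfin u):ℝ) ≤ (b:ℝ)/((deg G hfin u):ℝ) := by
        gcongr
        exact_mod_cast hab
      linarith
    intro k k' hkk'
    simp only [Function.onFun]
    have hsub : ∀ j : Fin (deg G hfin u),
        (fun ω : ℝ => ((deg G hfin u):ℝ) * ω - ((j:ℕ):ℝ)) ⁻¹' (A j ∩ Set.Ico 0 1) ⊆
          Set.Ico ((((j:ℕ)):ℝ) / (deg G hfin u)) ((((j:ℕ):ℝ) + 1) / (deg G hfin u)) := by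
      intro j ω hω
      rw [mem_subint_iff j.isLt]
      exact hω.2
    refine Set.disjoint_of_subset (hsub k) (hsub k') ?_
    have hne : (k:ℕ) ≠ (k':ℕ) := fun h => hkk' (Fin.ext h)
    rcases Nat.lt_or_ge (k:ℕ) (k':ℕ) with h | h
    · exact hdisj _ _ h
    · exact (hdisj _ _ (lt_of_le_of_ne h (Ne.symm hne))).symm


set_option maxHeartbeats 1000000 in
theorem cyl (hdeg : ∀ u, 0 < deg G hfin u) :
    ∀ (n : ℕ) (u : V) (f : ℕ → V),
    MeasurableSet ({ω : ℝ | ∀ i ≤ n, X hfin u i ω = f i} ∩ Set.Ico 0 1) ∧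
    volume ({ω : ℝ | ∀ i ≤ n, X hfin u i ω = f i} ∩ Set.Ico 0 1) =
      (if f 0 = u then ∏ i ∈ Finset.range n,
        (if G.Adj (f i) (f (i+1)) then (((hfin (f i)).toFinset.card : ENNReal))⁻¹ else 0) else 0) := by
  intro n
  induction n with
  | zero =>
    intro u f
    by_cases h : f 0 = u
    · have hset : {ω : ℝ | ∀ i ≤ 0, X hfin u i ω = f i} = Set.univ := by
        ext ω
        simp only [Set.mem_setOf_eq, Set.mem_univ, iff_true]
        intro i hi
        have hi0 : i = 0 := Nat.le_zero.mp hi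
        subst hi0
        rw [X_zero, h]
      rw [hset, if_pos h, Finset.range_zero, Finset.prod_empty, Set.univ_inter]
      refine ⟨measurableSet_Ico, ?_⟩
      rw [Real.volume_Ico]
      norm_num
    · have hset : {ω : ℝ | ∀ i ≤ 0, X hfin u i ω = f i} = ∅ := by
        ext ω
        simp only [Set.mem_setOf_eq, Set.mem_empty_iff_false, iff_false]
        intro hall
        exact h ((hall 0 le_rfl) ▸ rfl)
      rw [hset, if_neg h, Set.empty_inter]
      exact ⟨MeasurableSet.empty, measure_empty⟩
  | succ n ih =>
    intro u f
    by_cases h0 : f 0 = u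
    · obtain ⟨hmeas, hval⟩ := slice hfin u (hdeg u) {ω : ℝ | ∀ i ≤ n+1, X hfin u i ω = f i}
        (fun k => {ω : ℝ | ∀ i ≤ n, X hfin (enbr G hfin u ↑k) i ω = f (i+1)})
        (by
          intro k ω hω
          simp only [Set.mem_setOf_eq]
          constructor
          · intro hmem j hj
            have := hmem (j+1) (by omega)
            rwa [X_shift hfin k.isLt hω j] at this
          · intro hmem i hi
            match i with
            | 0 => rw [X_zero, h0]
            | (j+1) =>
              rw [X_shift hfin k.isLt hω j]
              exact hmem j (by omega))
        (fun k => (ih (enbr G hfin u ↑k) (fun i => f (i+1))).1)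
      refine ⟨hmeas, ?_⟩
      rw [hval]
      have hAk : ∀ k : Fin (deg G hfin u),
          volume ({ω : ℝ | ∀ i ≤ n, X hfin (enbr G hfin u ↑k) i ω = f (i+1)} ∩ Set.Ico 0 1) =
          (if f (0+1) = enbr G hfin u ↑k then ∏ i ∈ Finset.range n,
            (if G.Adj (f (i+1)) (f (i+1+1)) then (((hfin (f (i+1))).toFinset.card : ENNReal))⁻¹ else 0) else 0) :=
        fun k => (ih (enbr G hfin u ↑k) (fun i => f (i+1))).2
      calc ∑ k : Fin (deg G hfin u), ((deg G hfin u : ℝ≥0∞))⁻¹ *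
            volume ({ω : ℝ | ∀ i ≤ n, X hfin (enbr G hfin u ↑k) i ω = f (i+1)} ∩ Set.Ico 0 1)
          = ∑ k : Fin (deg G hfin u), ((deg G hfin u : ℝ≥0∞))⁻¹ *
            (if f (0+1) = enbr G hfin u ↑k then ∏ i ∈ Finset.range n,
              (if G.Adj (f (i+1)) (f (i+1+1)) then (((hfin (f (i+1))).toFinset.card : ENNReal))⁻¹ else 0) else 0) :=
            Finset.sum_congr rfl fun k _ => by rw [hAk k]
        _ = ∑ w ∈ (hfin u).toFinset, ((deg G hfin u : ℝ≥0∞))⁻¹ *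
            (if f (0+1) = w then ∏ i ∈ Finset.range n,
              (if G.Adj (f (i+1)) (f (i+1+1)) then (((hfin (f (i+1))).toFinset.card : ENNReal))⁻¹ else 0) else 0) :=
            sum_enbr hfin u (fun w => ((deg G hfin u : ℝ≥0∞))⁻¹ *
              (if f (0+1) = w then ∏ i ∈ Finset.range n,
                (if G.Adj (f (i+1)) (f (i+1+1)) then (((hfin (f (i+1))).toFinset.card : ENNReal))⁻¹ else 0) else 0))
        _ = ((deg G hfin u : ℝ≥0∞))⁻¹ *
            (if f (0+1) ∈ (hfin u).toFinset then ∏ i ∈ Finset.range n,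
              (if G.Adj (f (i+1)) (f (i+1+1)) then (((hfin (f (i+1))).toFinset.card : ENNReal))⁻¹ else 0) else 0) := by
            rw [← Finset.mul_sum, Finset.sum_ite_eq]
        _ = (if f 0 = u then ∏ i ∈ Finset.range (n+1),
              (if G.Adj (f i) (f (i+1)) then (((hfin (f i)).toFinset.card : ENNReal))⁻¹ else 0) else 0) := by
            rw [if_pos h0, Finset.prod_range_succ', h0]
            by_cases hadj : G.Adj u (f (0+1))
            · rw [if_pos ((hfin u).mem_toFinset.mpr hadj), if_pos hadj, mul_comm]
            · rw [if_neg (fun hmem => hadj ((hfin u).mem_toFinset.mp hmem)), if_neg hadj,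
                mul_zero, mul_zero]
    · have hset : {ω : ℝ | ∀ i ≤ n+1, X hfin u i ω = f i} = ∅ := by
        ext ω
        simp only [Set.mem_setOf_eq, Set.mem_empty_iff_false, iff_false]
        intro hall
        exact h0 ((hall 0 (by omega)) ▸ rfl)
      rw [hset, if_neg h0, Set.empty_inter]
      exact ⟨MeasurableSet.empty, measure_empty⟩


variable (G) in
/-- probability of avoiding `d` at times `1..n` starting from `u` -/
noncomputable def b (d : V) : ℕ → V → ℝ≥0∞
  | 0, _ => 1
  | (n+1), u => ∑ k : Fin (deg G hfin u), ((deg G hfin u : ℝ≥0∞))⁻¹ *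
      (if enbr G hfin u ↑k = d then 0 else b d n (enbr G hfin u ↑k))

set_option maxHeartbeats 1000000 in
theorem Emeas (hdeg : ∀ u, 0 < deg G hfin u) (d : V) :
    ∀ (n : ℕ) (u : V),
      MeasurableSet ({ω : ℝ | ∀ i, 1 ≤ i → i ≤ n → X hfin u i ω ≠ d} ∩ Set.Ico 0 1) ∧
      volume ({ω : ℝ | ∀ i, 1 ≤ i → i ≤ n → X hfin u i ω ≠ d} ∩ Set.Ico 0 1) = b G hfin d n u := by
  intro n
  induction n with
  | zero =>
    intro u
    have hset : {ω : ℝ | ∀ i, 1 ≤ i → i ≤ 0 → X hfin u i ω ≠ d} = Set.univ := by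
      ext ω
      simp only [Set.mem_setOf_eq, Set.mem_univ, iff_true]
      intro i h1 h2
      omega
    rw [hset, Set.univ_inter, b]
    refine ⟨measurableSet_Ico, ?_⟩
    rw [Real.volume_Ico]
    norm_num
  | succ n ih =>
    intro u
    obtain ⟨hmeas, hval⟩ := slice hfin u (hdeg u)
      {ω : ℝ | ∀ i, 1 ≤ i → i ≤ n+1 → X hfin u i ω ≠ d}
      (fun k => if enbr G hfin u ↑k = d then ∅ else
        {ω : ℝ | ∀ i, 1 ≤ i → i ≤ n → X hfin (enbr G hfin u ↑k) i ω ≠ d})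
      (by
        intro k ω hω
        beta_reduce
        by_cases he : enbr G hfin u ↑k = d
        · rw [if_pos he]
          simp only [Set.mem_setOf_eq, Set.mem_empty_iff_false, iff_false, not_forall]
          refine ⟨1, by omega, by omega, ?_⟩
          have h1 : X hfin u (0+1) ω = enbr G hfin u ↑k := by
            rw [X_shift hfin k.isLt hω 0, X_zero]
          simp only [Classical.not_not]
          rw [← he]
          exact h1
        · rw [if_neg he]
          simp only [Set.mem_setOf_eq]
          constructor
          · intro hmem j hj1 hj2
            have := hmem (j+1) (by omega) (by omega)
            rwa [X_shift hfin k.isLt hω j] at this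
          · intro hmem i hi1 hi2
            match i with
            | (j+1) =>
              rw [X_shift hfin k.isLt hω j]
              match j with
              | 0 => rw [X_zero]; exact he
              | (j'+1) => exact hmem (j'+1) (by omega) (by omega))
      (by
        intro k
        beta_reduce
        by_cases he : enbr G hfin u ↑k = d
        · rw [if_pos he, Set.empty_inter]
          exact MeasurableSet.empty
        · rw [if_neg he]
          exact (ih _).1)
    refine ⟨hmeas, ?_⟩
    rw [hval, b]
    refine Finset.sum_congr rfl fun k _ => ?_
    congr 1
    by_cases he : enbr G hfin u ↑k = d
    · rw [if_pos he, if_pos he, Set.empty_inter, measure_empty]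
    · rw [if_neg he, if_neg he]
      exact (ih _).2

lemma b_le_one (hdeg : ∀ u, 0 < deg G hfin u) (d : V) : ∀ (n : ℕ) (u : V), b G hfin d n u ≤ 1 := by
  intro n
  induction n with
  | zero => intro u; rw [b]
  | succ n ih =>
    intro u
    rw [b]
    calc ∑ k : Fin (deg G hfin u), ((deg G hfin u : ℝ≥0∞))⁻¹ *
          (if enbr G hfin u ↑k = d then 0 else b G hfin d n (enbr G hfin u ↑k))
        ≤ ∑ _k : Fin (deg G hfin u), ((deg G hfin u : ℝ≥0∞))⁻¹ * 1 := by
          refine Finset.sum_le_sum fun k _ => ?_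
          refine mul_le_mul_right ?_ _
          by_cases he : enbr G hfin u ↑k = d
          · rw [if_pos he]; exact zero_le_one
          · rw [if_neg he]; exact ih _
      _ = 1 := by
          rw [Finset.sum_const, Finset.card_univ, Fintype.card_fin, mul_one, nsmul_eq_mul]
          exact ENNReal.mul_inv_cancel (by exact_mod_cast (hdeg u).ne') (ENNReal.natCast_ne_top _)

lemma b_antitone (d : V) : ∀ (n : ℕ) (u : V), b G hfin d (n+1) u ≤ b G hfin d n u := by
  intro n
  induction n with
  | zero =>
    intro u
    rw [b, b]
    calc ∑ k : Fin (deg G hfin u), ((deg G hfin u : ℝ≥0∞))⁻¹ *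
          (if enbr G hfin u ↑k = d then 0 else b G hfin d 0 (enbr G hfin u ↑k))
        ≤ ∑ _k : Fin (deg G hfin u), ((deg G hfin u : ℝ≥0∞))⁻¹ * 1 := by
          refine Finset.sum_le_sum fun k _ => ?_
          refine mul_le_mul_right ?_ _
          by_cases he : enbr G hfin u ↑k = d
          · rw [if_pos he]; exact zero_le_one
          · rw [if_neg he, b]
      _ ≤ 1 := by
          by_cases hdu : 0 < deg G hfin u
          · rw [Finset.sum_const, Finset.card_univ, Fintype.card_fin, mul_one, nsmul_eq_mul]
            rw [ENNReal.mul_inv_cancel (by exact_mod_cast hdu.ne') (ENNReal.natCast_ne_top _)]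
          · have : deg G hfin u = 0 := by omega
            rw [this]
            simp
  | succ n ih =>
    intro u
    rw [b, b]
    refine Finset.sum_le_sum fun k _ => ?_
    refine mul_le_mul_right ?_ _
    by_cases he : enbr G hfin u ↑k = d
    · rw [if_pos he, if_pos he]
    · rw [if_neg he, if_neg he]
      exact ih _

lemma b_step (d u w : V) (hadj : G.Adj u w) (hw : w ≠ d) (n : ℕ) :
    ((deg G hfin u : ℝ≥0∞))⁻¹ * b G hfin d n w ≤ b G hfin d (n+1) u := by
  obtain ⟨k, hk⟩ := exists_enbr hfin u w hadj
  rw [b]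
  have : ((deg G hfin u : ℝ≥0∞))⁻¹ * b G hfin d n w =
      ((deg G hfin u : ℝ≥0∞))⁻¹ * (if enbr G hfin u ↑k = d then 0 else b G hfin d n (enbr G hfin u ↑k)) := by
    rw [hk, if_neg hw]
  rw [this]
  exact Finset.single_le_sum (f := fun k : Fin (deg G hfin u) => ((deg G hfin u : ℝ≥0∞))⁻¹ *
    (if enbr G hfin u ↑k = d then 0 else b G hfin d n (enbr G hfin u ↑k)))
    (fun _ _ => zero_le) (Finset.mem_univ k)

lemma b_chain (d : V) : ∀ (u w : V) (p : G.Walk u w), (∀ x ∈ p.support.tail, x ≠ d) →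
    ∃ c : ℝ≥0∞, c ≠ 0 ∧ c ≤ 1 ∧ ∀ n, c * b G hfin d n w ≤ b G hfin d (n + p.length) u := by
  intro u w p
  induction p with
  | nil =>
    exact fun _ => ⟨1, one_ne_zero, le_refl 1, fun n => by
      rw [SimpleGraph.Walk.length_nil, one_mul, Nat.add_zero]⟩
  | @cons a a' a'' hadj q ihq =>
    intro htail
    have htail0 : ∀ x ∈ q.support, x ≠ d := by
      intro x hx
      apply htail
      rw [SimpleGraph.Walk.support_cons]
      exact hx
    have ha' : a' ≠ d := htail0 a' q.start_mem_support
    have htail' : ∀ x ∈ q.support.tail, x ≠ d := fun x hx => htail0 x (List.mem_of_mem_tail hx)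
    obtain ⟨c, hc0, hc1, hcn⟩ := ihq htail'
    have hdega : 0 < deg G hfin a :=
      Finset.card_pos.mpr ⟨a', (hfin a).mem_toFinset.mpr hadj⟩
    refine ⟨((deg G hfin a : ℝ≥0∞))⁻¹ * c,
      mul_ne_zero (ENNReal.inv_ne_zero.mpr (ENNReal.natCast_ne_top _)) hc0, ?_, ?_⟩
    · have h1 : ((deg G hfin a : ℝ≥0∞))⁻¹ ≤ 1 :=
        ENNReal.inv_le_one.mpr (by exact_mod_cast hdega)
      calc ((deg G hfin a : ℝ≥0∞))⁻¹ * c ≤ 1 * 1 := mul_le_mul' h1 hc1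
        _ = 1 := one_mul 1
    · intro n
      rw [SimpleGraph.Walk.length_cons]
      have hidx : n + (q.length + 1) = n + q.length + 1 := by omega
      rw [hidx, mul_assoc]
      calc ((deg G hfin a : ℝ≥0∞))⁻¹ * (c * b G hfin d n a'')
          ≤ ((deg G hfin a : ℝ≥0∞))⁻¹ * b G hfin d (n + q.length) a' :=
            mul_le_mul_right (hcn n) _
        _ ≤ b G hfin d (n + q.length + 1) a := b_step hfin d a a' hadj ha' _


/-- custom measure space on ℝ: Lebesgue measure restricted to `[0,1)` -/
noncomputable def msp : MeasureSpace ℝ :=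
  { toMeasurableSpace := (inferInstance : MeasurableSpace ℝ)
    volume := MeasureTheory.volume.restrict (Set.Ico 0 1) }

lemma msp_prob : IsProbabilityMeasure (MeasureTheory.volume.restrict (Set.Ico (0:ℝ) 1)) := by
  constructor
  rw [Measure.restrict_apply_univ, Real.volume_Ico]
  norm_num

theorem srwlaw (hdeg : ∀ u, 0 < deg G hfin u) (v : V) :
    @SRWLaw V G hfin ℝ msp (X hfin v) v := by
  unfold SRWLaw
  intro n f
  show MeasureTheory.volume.restrict (Set.Ico 0 1) {ω : ℝ | ∀ i ≤ n, X hfin v i ω = f i} = _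
  rw [Measure.restrict_apply' measurableSet_Ico]
  exact (cyl hfin hdeg n v f).2

set_option maxHeartbeats 1000000 in
theorem b_tendsto (hdeg : ∀ u, 0 < deg G hfin u) (hrec : Recurrent G hfin) (d : V) :
    Tendsto (fun n => b G hfin d n d) atTop (nhds 0) := by
  have hprob : IsProbabilityMeasure (@MeasureTheory.volume ℝ msp) := msp_prob
  have hret := hrec ℝ msp (X hfin d) d hprob (srwlaw hfin hdeg d)
  have hR : MeasureTheory.volume.restrict (Set.Ico (0:ℝ) 1)
      {ω : ℝ | ∃ n, 0 < n ∧ X hfin d n ω = d} = 1 := hret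
  rw [Measure.restrict_apply' measurableSet_Ico] at hR
  set S : ℕ → Set ℝ :=
    fun n => {ω : ℝ | ∀ i, 1 ≤ i → i ≤ n → X hfin d i ω ≠ d} ∩ Set.Ico 0 1 with hSdef
  have hSmeas : ∀ n, MeasurableSet (S n) := fun n => (Emeas hfin hdeg d n d).1
  have hSvol : ∀ n, volume (S n) = b G hfin d n d := fun n => (Emeas hfin hdeg d n d).2
  have hanti : Antitone S := by
    intro m n hmn ω hω
    exact ⟨fun i h1 h2 => hω.1 i h1 (h2.trans hmn), hω.2⟩
  have hlim := tendsto_measure_iInter_atTop (μ := (volume : Measure ℝ))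
    (fun n => (hSmeas n).nullMeasurableSet) hanti
    ⟨0, by rw [hSvol 0]; exact (lt_of_le_of_lt (b_le_one hfin hdeg d 0 d) ENNReal.one_lt_top).ne⟩
  have hTsub : (⋂ n, S n) ⊆ Set.Ico (0:ℝ) 1 := fun ω hω => (Set.mem_iInter.mp hω 0).2
  have hdiff : Set.Ico (0:ℝ) 1 \ (⋂ n, S n) =
      {ω : ℝ | ∃ n, 0 < n ∧ X hfin d n ω = d} ∩ Set.Ico 0 1 := by
    ext ω
    constructor
    · rintro ⟨hI, hnot⟩
      refine ⟨?_, hI⟩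
      by_contra hno
      rw [Set.mem_setOf_eq] at hno
      push_neg at hno
      exact hnot (Set.mem_iInter.mpr fun n => ⟨fun i h1 _ => hno i h1, hI⟩)
    · rintro ⟨hmem, hI⟩
      obtain ⟨n, hn0, hnd⟩ := hmem
      refine ⟨hI, fun hin => ?_⟩
      exact ((Set.mem_iInter.mp hin n).1 n hn0 le_rfl) hnd
  have hzero : volume (⋂ n, S n) = 0 := by
    have hsplit := measure_inter_add_diff (μ := (volume : Measure ℝ)) (Set.Ico (0:ℝ) 1)
      (MeasurableSet.iInter hSmeas)
    rw [Set.inter_eq_right.mpr hTsub, hdiff, hR, Real.volume_Ico] at hsplit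
    have h1 : volume (⋂ n, S n) + 1 = 0 + 1 := by
      rw [hsplit]
      norm_num
    exact WithTop.add_right_cancel (by exact ENNReal.one_ne_top) h1
  have heq : (fun n => b G hfin d n d) = fun n => volume (S n) :=
    funext fun n => (hSvol n).symm
  rw [heq]
  have : Tendsto (volume ∘ S) atTop (nhds 0) := hzero ▸ hlim
  exact this

theorem b_tendsto_all (hdeg : ∀ u, 0 < deg G hfin u) (hrec : Recurrent G hfin)
    (hconnG : G.Connected) (d v : V) :
    Tendsto (fun n => b G hfin d n v) atTop (nhds 0) := by
  have hreach : G.Reachable d v := hconnG.preconnected d v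
  obtain ⟨p⟩ := hreach
  have hnodup := p.toPath.2.support_nodup
  set q := (p.toPath : G.Walk d v) with hq
  have htail : ∀ x ∈ q.support.tail, x ≠ d := by
    have hcons : q.support = d :: q.support.tail := q.support_eq_cons
    intro x hx hxd
    rw [hcons, List.nodup_cons] at hnodup
    exact hnodup.1 (hxd ▸ hx)
  obtain ⟨c, hc0, hc1, hcn⟩ := b_chain hfin d d v q htail
  have hbase := (b_tendsto hfin hdeg hrec d).comp (tendsto_add_atTop_nat q.length)
  have h2 : Tendsto (fun n => c * b G hfin d n v) atTop (nhds 0) :=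
    tendsto_of_tendsto_of_tendsto_of_le_of_le tendsto_const_nhds hbase
      (fun n => zero_le) (fun n => hcn n)
  have hcne : c ≠ ⊤ := (hc1.trans_lt ENNReal.one_lt_top).ne
  have h3 : Tendsto (fun n => c⁻¹ * (c * b G hfin d n v)) atTop (nhds 0) := by
    have := ENNReal.Tendsto.const_mul (a := c⁻¹) h2 (Or.inr (ENNReal.inv_ne_top.mpr hc0))
    rwa [mul_zero] at this
  have heq : (fun n => b G hfin d n v) = fun n => c⁻¹ * (c * b G hfin d n v) := by
    funext n
    rw [← mul_assoc, ENNReal.inv_mul_cancel hc0 hcne, one_mul]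
  rw [heq]
  exact h3

variable (G) in
/-- deterministic iteration for avoiding `D`, starting at time `0` -/
noncomputable def aD (D : Finset V) : ℕ → V → ℝ≥0
  | 0, u => if u ∈ D then 0 else 1
  | (n+1), u => if u ∈ D then 0 else
      (∑ k : Fin (deg G hfin u), aD D n (enbr G hfin u ↑k)) / (deg G hfin u : ℝ≥0)

lemma aD_mem (D : Finset V) (n : ℕ) (u : V) (hu : u ∈ D) : aD G hfin D n u = 0 := by
  cases n <;> simp [aD, hu]

lemma aD_le_b (hdeg : ∀ u, 0 < deg G hfin u) (D : Finset V) (d : V) (hd : d ∈ D) :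
    ∀ (n : ℕ) (u : V), ((aD G hfin D n u : ℝ≥0) : ℝ≥0∞) ≤ b G hfin d n u := by
  intro n
  induction n with
  | zero =>
    intro u
    by_cases hu : u ∈ D
    · rw [aD_mem hfin D 0 u hu]
      exact zero_le
    · rw [b]
      have : aD G hfin D 0 u = 1 := by rw [aD, if_neg hu]
      rw [this, ENNReal.coe_one]
  | succ n ih =>
    intro u
    by_cases hu : u ∈ D
    · rw [aD_mem hfin D (n+1) u hu]
      exact zero_le
    · have hdu : ((deg G hfin u : ℝ≥0)) ≠ 0 := Nat.cast_ne_zero.mpr (hdeg u).ne'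
      have heq : aD G hfin D (n+1) u =
          (∑ k : Fin (deg G hfin u), aD G hfin D n (enbr G hfin u ↑k)) / (deg G hfin u : ℝ≥0) := by
        rw [aD, if_neg hu]
      rw [heq, b, ENNReal.coe_div hdu, ENNReal.coe_finset_sum, ENNReal.div_eq_inv_mul,
        Finset.mul_sum]
      refine Finset.sum_le_sum fun k _ => ?_
      have hcast : (((deg G hfin u : ℝ≥0)) : ℝ≥0∞)⁻¹ = ((deg G hfin u : ℕ) : ℝ≥0∞)⁻¹ := by
        congr 1
      rw [hcast]
      refine mul_le_mul_right ?_ _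
      by_cases he : enbr G hfin u ↑k = d
      · rw [if_pos he, he, aD_mem hfin D n d hd]
        exact le_refl _
      · rw [if_neg he]
        exact ih _

theorem aD_tendsto (hdeg : ∀ u, 0 < deg G hfin u) (hrec : Recurrent G hfin)
    (hconnG : G.Connected) (D : Finset V) (d : V) (hd : d ∈ D) (v : V) :
    Tendsto (fun n => ((aD G hfin D n v : ℝ≥0) : ℝ)) atTop (nhds 0) := by
  have hb := b_tendsto_all hfin hdeg hrec hconnG d v
  have h1 : Tendsto (fun n => ((aD G hfin D n v : ℝ≥0) : ℝ≥0∞)) atTop (nhds 0) :=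
    tendsto_of_tendsto_of_tendsto_of_le_of_le tendsto_const_nhds hb
      (fun n => zero_le) (fun n => aD_le_b hfin hdeg D d hd n v)
  rw [← ENNReal.coe_zero] at h1
  have h2 := ENNReal.tendsto_coe.mp h1
  have h3 := NNReal.tendsto_coe.mpr h2
  rwa [NNReal.coe_zero] at h3


end SRWAux

/-- Let `(H_n)_{1 ≤ n ≤ ∞}` (indexed here by `ℕ∞`, with `⊤`
playing the role of `∞`) be locally finite connected rooted graphs converging
to `H_∞` in the local weak sense (for every radius `r`, the rooted `r`-balls
eventually agree), with `H_∞` recurrent. Let `D` be a finite vertex set and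
`φ_n` harmonic on `H_n` with boundary `D`, all agreeing on `D` and uniformly
bounded. Then `φ_n → φ_∞` pointwise. -/
theorem harmonic_functions_converge {V : Type*}
    (H : ℕ∞ → SimpleGraph V) (ρ : V)
    (hfin : ∀ n : ℕ∞, ∀ v : V, ((H n).neighborSet v).Finite)
    (hconn : ∀ n : ℕ∞, (H n).Connected)
    (hconv : ∀ r : ℕ, ∃ N : ℕ, ∀ n : ℕ, N ≤ n → ∀ u w : V,
      (H ⊤).dist ρ u ≤ r → ((H (n : ℕ∞)).Adj u w ↔ (H ⊤).Adj u w))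
    (hrec : Recurrent (H ⊤) (hfin ⊤))
    (D : Finset V) (hD : D.Nonempty)
    (φ : ℕ∞ → V → ℝ)
    (hharm : ∀ n : ℕ∞, HarmonicOn (H n) (hfin n) D (φ n))
    (hagree : ∀ n : ℕ∞, ∀ d ∈ D, φ n d = φ ⊤ d)
    (hbdd : ∃ C : ℝ, ∀ (n : ℕ∞) (v : V), |φ n v| ≤ C) :
    ∀ v : V, Tendsto (fun n : ℕ => φ (n : ℕ∞) v) atTop (nhds (φ ⊤ v)) := by
  intro v
  obtain ⟨C, hC⟩ := hbdd
  obtain ⟨d0, hd0⟩ := hD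
  by_cases htriv : ∀ u w : V, u = w
  · have hv : v ∈ D := (htriv d0 v) ▸ hd0
    have heq : ∀ n : ℕ, φ (n : ℕ∞) v = φ ⊤ v := fun n => hagree (n : ℕ∞) v hv
    simp only [heq]
    exact tendsto_const_nhds
  · push_neg at htriv
    obtain ⟨u0, w0, huw⟩ := htriv
    have hdeg : ∀ u : V, 0 < SRWAux.deg (H ⊤) (hfin ⊤) u := by
      intro u
      have hz : ∃ z : V, z ≠ u := by
        by_cases h : u0 = u
        · exact ⟨w0, fun hw => huw (h.trans hw.symm)⟩
        · exact ⟨u0, h⟩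
      obtain ⟨z, hz⟩ := hz
      obtain ⟨p⟩ := (hconn ⊤).preconnected u z
      cases p with
      | nil => exact absurd rfl hz.symm
      | cons hadj q =>
        exact Finset.card_pos.mpr ⟨_, ((hfin ⊤) u).mem_toFinset.mpr hadj⟩
    have hC0 : 0 ≤ C := le_trans (abs_nonneg _) (hC ⊤ v)
    have haD := SRWAux.aD_tendsto (hfin ⊤) hdeg hrec (hconn ⊤) D d0 hd0 v
    rw [Metric.tendsto_atTop]
    intro ε hε
    have hεpos : 0 < ε / (2*C+1) := by positivity
    obtain ⟨n, hn⟩ := (haD.eventually (gt_mem_nhds hεpos)).exists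
    obtain ⟨N, hN⟩ := hconv ((H ⊤).dist ρ v + n)
    refine ⟨N, fun m hm => ?_⟩
    have hadjeq : ∀ u w : V, (H ⊤).dist ρ u ≤ (H ⊤).dist ρ v + n →
        ((H (m : ℕ∞)).Adj u w ↔ (H ⊤).Adj u w) := fun u w h => hN m hm u w (by exact_mod_cast h)
    have claim : ∀ (k : ℕ) (u : V), (H ⊤).dist ρ u + k ≤ (H ⊤).dist ρ v + n →
        |φ (m : ℕ∞) u - φ ⊤ u| ≤ 2*C*((SRWAux.aD (H ⊤) (hfin ⊤) D k u : ℝ≥0) : ℝ) := by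
      intro k
      induction k with
      | zero =>
        intro u _
        by_cases huD : u ∈ D
        · rw [hagree (m:ℕ∞) u huD, sub_self, abs_zero, SRWAux.aD_mem (hfin ⊤) D 0 u huD]
          simp
        · have h1 : SRWAux.aD (H ⊤) (hfin ⊤) D 0 u = 1 := by rw [SRWAux.aD, if_neg huD]
          rw [h1]
          calc |φ (m:ℕ∞) u - φ ⊤ u| ≤ |φ (m:ℕ∞) u| + |φ ⊤ u| := abs_sub _ _
            _ ≤ C + C := add_le_add (hC _ _) (hC _ _)
            _ = 2*C*((1:ℝ≥0):ℝ) := by push_cast; ring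
      | succ k ih =>
        intro u hu
        by_cases huD : u ∈ D
        · rw [hagree (m:ℕ∞) u huD, sub_self, abs_zero,
            SRWAux.aD_mem (hfin ⊤) D (k+1) u huD]
          simp
        · have hdistu : (H ⊤).dist ρ u ≤ (H ⊤).dist ρ v + n := by omega
          have hNu : (hfin (m:ℕ∞) u).toFinset = (hfin ⊤ u).toFinset := by
            ext w
            rw [Set.Finite.mem_toFinset, Set.Finite.mem_toFinset]
            exact hadjeq u w hdistu
          have hφm := by unfold HarmonicOn at hharm; exact hharm (m:ℕ∞) u huD
          have hφt := by unfold HarmonicOn at hharm; exact hharm ⊤ u huD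
          rw [hNu] at hφm
          have hdr : (0:ℝ) < ((hfin ⊤ u).toFinset.card : ℝ) := by exact_mod_cast hdeg u
          have hsub : φ (m:ℕ∞) u - φ ⊤ u =
              (∑ w ∈ (hfin ⊤ u).toFinset, (φ (m:ℕ∞) w - φ ⊤ w)) /
                ((hfin ⊤ u).toFinset.card : ℝ) := by
            rw [hφm, hφt, div_sub_div_same, Finset.sum_sub_distrib]
          have hrhs : 2*C*((SRWAux.aD (H ⊤) (hfin ⊤) D (k+1) u : ℝ≥0) : ℝ) =
              (∑ w ∈ (hfin ⊤ u).toFinset, 2*C*((SRWAux.aD (H ⊤) (hfin ⊤) D k w : ℝ≥0) : ℝ)) /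
                ((hfin ⊤ u).toFinset.card : ℝ) := by
            have h1 : SRWAux.aD (H ⊤) (hfin ⊤) D (k+1) u =
                (∑ j : Fin (SRWAux.deg (H ⊤) (hfin ⊤) u),
                  SRWAux.aD (H ⊤) (hfin ⊤) D k (SRWAux.enbr (H ⊤) (hfin ⊤) u ↑j)) /
                  ((SRWAux.deg (H ⊤) (hfin ⊤) u : ℝ≥0)) := by
              rw [SRWAux.aD, if_neg huD]
            rw [h1]
            push_cast [SRWAux.sum_enbr (hfin ⊤) u
              (fun w => ((SRWAux.aD (H ⊤) (hfin ⊤) D k w : ℝ≥0) : ℝ))]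
            rw [← Finset.mul_sum, mul_div_assoc]
          rw [hsub, abs_div, abs_of_pos hdr, hrhs]
          gcongr
          calc |∑ w ∈ (hfin ⊤ u).toFinset, (φ (m:ℕ∞) w - φ ⊤ w)| ≤
              ∑ w ∈ (hfin ⊤ u).toFinset, |φ (m:ℕ∞) w - φ ⊤ w| :=
                Finset.abs_sum_le_sum_abs _ _
            _ ≤ ∑ w ∈ (hfin ⊤ u).toFinset, 2*C*((SRWAux.aD (H ⊤) (hfin ⊤) D k w : ℝ≥0) : ℝ) := by
                refine Finset.sum_le_sum fun w hw => ?_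
                have hadjw : (H ⊤).Adj u w := (hfin ⊤ u).mem_toFinset.mp hw
                have h1 : (H ⊤).dist u w ≤ 1 := by
                  refine le_trans (SimpleGraph.dist_le
                    (SimpleGraph.Walk.cons hadjw SimpleGraph.Walk.nil)) ?_
                  simp
                have h2 : (H ⊤).dist ρ w ≤ (H ⊤).dist ρ u + (H ⊤).dist u w :=
                  (hconn ⊤).dist_triangle
                exact ih w (by omega)
    have hfinal := claim n v (by omega)
    rw [Real.dist_eq]
    have ha0 : (0:ℝ) ≤ ((SRWAux.aD (H ⊤) (hfin ⊤) D n v : ℝ≥0) : ℝ) := NNReal.coe_nonneg _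
    calc |φ (m:ℕ∞) v - φ ⊤ v| ≤ 2*C*((SRWAux.aD (H ⊤) (hfin ⊤) D n v : ℝ≥0) : ℝ) := hfinal
      _ ≤ (2*C+1)*((SRWAux.aD (H ⊤) (hfin ⊤) D n v : ℝ≥0) : ℝ) := by nlinarith
      _ < (2*C+1)*(ε/(2*C+1)) := by
          exact mul_lt_mul_of_pos_left hn (by linarith)
      _ = ε := by field_simp
end

section
/- Let G be a finite 3-connected planar map embedded in the plane, with root edge st, and let ℓ: v(G) → {horizontal segments of the squaring S(G)} assign to each vertex its associated horizontal line segment (at height equal to its potential). Then for every vertex v, the segment ℓ(v) is non-degenerate (has positive length). Equivalently: in a 3-connected planar network with unit potential between s and t, positive current flows through every vertex. -/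
open Finset

/-- Let `G` be a finite `3`-connected planar map with root
edge `st`, harmonic potential `P` (`P s = 1`, `P t = 0`), and let
`ℓ v` be the horizontal line segment at height `P v` which vertex `v` receives
in the squaring `S(G)`. The geometric structure of the squaring is encoded by
the hypotheses: each `ℓ v` is a (possibly degenerate) horizontal closed
segment at height `P v`; distinct lines meet in at most one point; if `ℓ u`
degenerates to a point `z` then `z` belongs to the line of every neighbour of
`u`; and the lines of `s` and `t` (the sides of the rectangle) are
non-degenerate. Then every segment `ℓ v` is non-degenerate, i.e. positive
current flows through every vertex. -/
theorem three_connected_lines_nondegenerate {V : Type*} [Fintype V] [DecidableEq V]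
    (G : SimpleGraph V) [DecidableRel G.Adj] (hconn : G.Connected)
    (h3 : ∀ A : Finset V, A.card ≤ 2 → (G.induce ((↑A : Set V)ᶜ)).Connected)
    (s t : V) (hst : G.Adj s t) (P : V → ℝ)
    (hPs : P s = 1) (hPt : P t = 0)
    (hharm : ∀ v, v ≠ s → v ≠ t →
      P v = (∑ w ∈ G.neighborFinset v, P w) / (G.degree v : ℝ))
    (ℓ : V → Set (ℝ × ℝ))
    (hseg : ∀ v, ∃ x₁ x₂ : ℝ, x₁ ≤ x₂ ∧ ℓ v = Set.Icc ((x₁, P v)) ((x₂, P v)))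
    (hinter : ∀ u v : V, u ≠ v → (ℓ u ∩ ℓ v).Subsingleton)
    (hedge : ∀ u v : V, G.Adj u v → ∀ z : ℝ × ℝ, ℓ u = {z} → z ∈ ℓ v)
    (hs : ¬ (ℓ s).Subsingleton) (ht : ¬ (ℓ t).Subsingleton) :
    ∀ v, ¬ (ℓ v).Subsingleton := by
  classical
  intro v hv
  -- `ℓ v` is a nonempty subsingleton, hence a single point `z`.
  obtain ⟨x₁, x₂, hx, hℓv⟩ := hseg v
  have hzmem : ((x₁, P v) : ℝ × ℝ) ∈ ℓ v := by
    rw [hℓv]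
    exact Set.mem_Icc.2 ⟨le_refl _, ⟨hx, le_refl _⟩⟩
  set z : ℝ × ℝ := (x₁, P v) with hzdef
  have hzv : ℓ v = {z} := hv.eq_singleton_of_mem hzmem
  -- Every point of a line has height equal to the potential.
  have hheight : ∀ u, ∀ p : ℝ × ℝ, p ∈ ℓ u → p.2 = P u := by
    intro u p hp
    obtain ⟨a, b, hab, hu⟩ := hseg u
    rw [hu, Set.mem_Icc] at hp
    exact le_antisymm hp.2.2 hp.1.2
  have hz2 : z.2 = P v := rfl
  -- Lines are order-convex (they are `Icc`s).
  have hconv : ∀ u, ∀ p q r : ℝ × ℝ, p ∈ ℓ u → r ∈ ℓ u → p ≤ q → q ≤ r → q ∈ ℓ u := by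
    intro u p q r hp hr hpq hqr
    obtain ⟨a, b, hab, hu⟩ := hseg u
    rw [hu, Set.mem_Icc] at hp hr
    rw [hu, Set.mem_Icc]
    exact ⟨le_trans hp.1 hpq, le_trans hqr hr.2⟩
  -- Two distinct lines through `z` cannot both extend strictly to the right of `z`.
  have pairR : ∀ u₁ u₂ : V, u₁ ≠ u₂ → z ∈ ℓ u₁ → z ∈ ℓ u₂ →
      ∀ p₁ ∈ ℓ u₁, ∀ p₂ ∈ ℓ u₂, z.1 < p₁.1 → z.1 < p₂.1 → False := by
    intro u₁ u₂ hne hz1 hz2' p₁ hp₁ p₂ hp₂ hr₁ hr₂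
    have h₁ : p₁.2 = z.2 := by
      rw [hheight u₁ p₁ hp₁, ← hheight u₁ z hz1]
    have h₂ : p₂.2 = z.2 := by
      rw [hheight u₂ p₂ hp₂, ← hheight u₂ z hz2']
    have hzm : z.1 < min p₁.1 p₂.1 := lt_min hr₁ hr₂
    obtain ⟨w1, hw1, hw2⟩ : ∃ w1 : ℝ, z.1 < w1 ∧ w1 < min p₁.1 p₂.1 :=
      ⟨(z.1 + min p₁.1 p₂.1) / 2, by linarith, by linarith⟩
    have hwu₁ : ((w1, z.2) : ℝ × ℝ) ∈ ℓ u₁ := by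
      refine hconv u₁ z (w1, z.2) p₁ hz1 hp₁ (Prod.le_def.2 ⟨le_of_lt hw1, le_of_eq rfl⟩)
        (Prod.le_def.2 ⟨le_of_lt (lt_of_lt_of_le hw2 (min_le_left _ _)), le_of_eq h₁.symm⟩)
    have hwu₂ : ((w1, z.2) : ℝ × ℝ) ∈ ℓ u₂ := by
      refine hconv u₂ z (w1, z.2) p₂ hz2' hp₂ (Prod.le_def.2 ⟨le_of_lt hw1, le_of_eq rfl⟩)
        (Prod.le_def.2 ⟨le_of_lt (lt_of_lt_of_le hw2 (min_le_right _ _)), le_of_eq h₂.symm⟩)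
    have heqwz := hinter u₁ u₂ hne ⟨hwu₁, hwu₂⟩ ⟨hz1, hz2'⟩
    have : w1 = z.1 := congrArg Prod.fst heqwz
    rw [this] at hw1
    exact lt_irrefl _ hw1
  -- Two distinct lines through `z` cannot both extend strictly to the left of `z`.
  have pairL : ∀ u₁ u₂ : V, u₁ ≠ u₂ → z ∈ ℓ u₁ → z ∈ ℓ u₂ →
      ∀ p₁ ∈ ℓ u₁, ∀ p₂ ∈ ℓ u₂, p₁.1 < z.1 → p₂.1 < z.1 → False := by
    intro u₁ u₂ hne hz1 hz2' p₁ hp₁ p₂ hp₂ hr₁ hr₂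
    have h₁ : p₁.2 = z.2 := by
      rw [hheight u₁ p₁ hp₁, ← hheight u₁ z hz1]
    have h₂ : p₂.2 = z.2 := by
      rw [hheight u₂ p₂ hp₂, ← hheight u₂ z hz2']
    have hzm : max p₁.1 p₂.1 < z.1 := max_lt hr₁ hr₂
    obtain ⟨w1, hw2, hw1⟩ : ∃ w1 : ℝ, max p₁.1 p₂.1 < w1 ∧ w1 < z.1 :=
      ⟨(z.1 + max p₁.1 p₂.1) / 2, by linarith, by linarith⟩
    have hwu₁ : ((w1, z.2) : ℝ × ℝ) ∈ ℓ u₁ := by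
      refine hconv u₁ p₁ (w1, z.2) z hp₁ hz1
        (Prod.le_def.2 ⟨le_of_lt (lt_of_le_of_lt (le_max_left _ _) hw2), le_of_eq h₁⟩)
        (Prod.le_def.2 ⟨le_of_lt hw1, le_of_eq rfl⟩)
    have hwu₂ : ((w1, z.2) : ℝ × ℝ) ∈ ℓ u₂ := by
      refine hconv u₂ p₂ (w1, z.2) z hp₂ hz2'
        (Prod.le_def.2 ⟨le_of_lt (lt_of_le_of_lt (le_max_right _ _) hw2), le_of_eq h₂⟩)
        (Prod.le_def.2 ⟨le_of_lt hw1, le_of_eq rfl⟩)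
    have heqwz := hinter u₁ u₂ hne ⟨hwu₁, hwu₂⟩ ⟨hz1, hz2'⟩
    have : w1 = z.1 := congrArg Prod.fst heqwz
    rw [this] at hw1
    exact lt_irrefl _ hw1
  -- The cutset: non-degenerate lines through `z`.
  set C : Finset V := Finset.univ.filter (fun u => z ∈ ℓ u ∧ ¬ (ℓ u).Subsingleton) with hC
  -- Every vertex in `C` has a point strictly left or strictly right of `z`.
  have hside : ∀ u ∈ C, (∃ p ∈ ℓ u, z.1 < p.1) ∨ (∃ p ∈ ℓ u, p.1 < z.1) := by
    intro u hu
    rw [hC, Finset.mem_filter] at hu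
    obtain ⟨-, hzu, hnsub⟩ := hu
    obtain ⟨a, b, hab, huℓ⟩ := hseg u
    have hane : a ≠ b := by
      intro h
      apply hnsub
      rw [huℓ, h, Set.Icc_self]
      exact Set.subsingleton_singleton
    have halt : a < b := lt_of_le_of_ne hab hane
    have hzu' := hzu
    rw [huℓ, Set.mem_Icc] at hzu'
    by_cases hcase : z.1 < b
    · left
      refine ⟨(b, P u), ?_, hcase⟩
      rw [huℓ, Set.mem_Icc]
      exact ⟨⟨hab, le_refl _⟩, ⟨le_refl _, le_refl _⟩⟩
    · right
      refine ⟨(a, P u), ?_, ?_⟩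
      · rw [huℓ, Set.mem_Icc]
        exact ⟨⟨le_refl _, le_refl _⟩, ⟨hab, le_refl _⟩⟩
      · have hzb : z.1 ≤ b := hzu'.2.1
        have : z.1 = b := le_antisymm hzb (not_lt.1 hcase)
        rw [this]; exact halt
  -- `C` has at most two elements.
  have hCcard : C.card ≤ 2 := by
    have hinj : Set.InjOn (fun u => decide (∃ p ∈ ℓ u, z.1 < p.1)) (C : Set V) := by
      intro u₁ hu₁ u₂ hu₂ heq
      by_contra hne
      have hu₁' := hu₁; have hu₂' := hu₂
      rw [Finset.mem_coe, hC, Finset.mem_filter] at hu₁' hu₂'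
      have hz1 : z ∈ ℓ u₁ := hu₁'.2.1
      have hz2' : z ∈ ℓ u₂ := hu₂'.2.1
      by_cases h1 : ∃ p ∈ ℓ u₁, z.1 < p.1
      · have h2 : ∃ p ∈ ℓ u₂, z.1 < p.1 := by
          have := heq
          simp only [decide_eq_decide] at this
          exact this.1 h1
        obtain ⟨p₁, hp₁, hr₁⟩ := h1
        obtain ⟨p₂, hp₂, hr₂⟩ := h2
        exact pairR u₁ u₂ hne hz1 hz2' p₁ hp₁ p₂ hp₂ hr₁ hr₂
      · have h2 : ¬ ∃ p ∈ ℓ u₂, z.1 < p.1 := by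
          have := heq
          simp only [decide_eq_decide] at this
          exact fun h => h1 (this.2 h)
        obtain ⟨p₁, hp₁, hl₁⟩ := (hside u₁ (Finset.mem_coe.1 hu₁)).resolve_left h1
        obtain ⟨p₂, hp₂, hl₂⟩ := (hside u₂ (Finset.mem_coe.1 hu₂)).resolve_left h2
        exact pairL u₁ u₂ hne hz1 hz2' p₁ hp₁ p₂ hp₂ hl₁ hl₂
    calc C.card ≤ (Finset.univ : Finset Bool).card :=
          Finset.card_le_card_of_injOn _ (fun a _ => Finset.mem_univ _) hinj
      _ = 2 := rfl
  -- `v ∉ C` since `ℓ v` is degenerate.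
  have hvC : v ∉ C := by
    rw [hC, Finset.mem_filter]
    rintro ⟨-, -, hns⟩
    exact hns hv
  -- In the induced graph on `Cᶜ`, everything reachable from `v` has line `{z}`.
  have hconn' := h3 C hCcard
  have hnotC : ∀ u : V, u ∉ C → z ∈ ℓ u → ℓ u = {z} := by
    intro u huC hzu
    rw [hC, Finset.mem_filter] at huC
    push_neg at huC
    have hsub : (ℓ u).Subsingleton := huC (Finset.mem_univ u) hzu
    exact hsub.eq_singleton_of_mem hzu
  have step : ∀ (x y : ((↑C : Set V)ᶜ : Set V))
      (p : (G.induce ((↑C : Set V)ᶜ)).Walk x y), ℓ (x : V) = {z} → ℓ (y : V) = {z} := by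
    intro x y p
    induction p with
    | nil => exact fun h => h
    | @cons a b c hadj p ih =>
      intro ha
      apply ih
      have hG : G.Adj (a : V) (b : V) := hadj
      have hzb : z ∈ ℓ (b : V) := hedge _ _ hG z ha
      have hbC : (b : V) ∉ C := fun hmem => b.2 (Finset.mem_coe.2 hmem)
      exact hnotC _ hbC hzb
  -- One of `s, t` is outside `C` (they can't both be at height `P v`).
  have hreach : ∀ w : V, w ∉ C → ¬ (ℓ w).Subsingleton → False := by
    intro w hwC hws
    have hvmem : v ∈ ((↑C : Set V)ᶜ) := by simpa using hvC
    have hwmem : w ∈ ((↑C : Set V)ᶜ) := by simpa using hwC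
    obtain ⟨p⟩ := hconn' ⟨v, hvmem⟩ ⟨w, hwmem⟩
    have := step ⟨v, hvmem⟩ ⟨w, hwmem⟩ p hzv
    apply hws
    rw [this]
    exact Set.subsingleton_singleton
  have hst' : s ∉ C ∨ t ∉ C := by
    by_contra h
    push_neg at h
    obtain ⟨hsC, htC⟩ := h
    rw [hC, Finset.mem_filter] at hsC htC
    have h1 : z.2 = P s := hheight s z hsC.2.1
    have h2 : z.2 = P t := hheight t z htC.2.1
    rw [hPs] at h1; rw [hPt] at h2
    linarith
  cases hst' with
  | inl h => exact hreach s h hs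
  | inr h => exact hreach t h ht
end
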